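/- Let $\theta > 0$ and $H \in (1/2, 1)$. Define $\sigma_T^2 = \int_0^T\int_0^T\int_0^s\int_0^t e^{-\theta u - \theta v}|u-v|^{2H-2}\,du\,dv\,ds\,dt$. Then there exists a constant $c > 0$ (depending on $\theta$ and $H$) and $T_0 > 0$ such that $\sigma_T^2 \geq c\, T^{2H}$ for all $T \geq T_0$; in particular $\sigma_T^2/T \to \infty$ as $T \to \infty$. -/

import Mathlib

open MeasureTheory intervalIntegral Filter Topology

namespace SigmaSqAux

noncomputable def ff (θ r u v : ℝ) : ℝ := Real.exp (-θ * u - θ * v) * |u - v| ^ r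

noncomputable def gg (θ r s v : ℝ) : ℝ := ∫ u in (0:ℝ)..s, ff θ r u v

noncomputable def G2 (θ r s t : ℝ) : ℝ := ∫ v in (0:ℝ)..t, gg θ r s v

lemma ff_nonneg (θ r u v : ℝ) : 0 ≤ ff θ r u v :=
  mul_nonneg (Real.exp_pos _).le (Real.rpow_nonneg (abs_nonneg _) _)

lemma abs_rpow_intervalIntegrable {r : ℝ} (hr : -1 < r) (a b : ℝ) :
    IntervalIntegrable (fun x : ℝ => |x| ^ r) volume a b := by
  suffices h : ∀ c : ℝ, IntervalIntegrable (fun x : ℝ => |x| ^ r) volume 0 c from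
    (h a).symm.trans (h b)
  have h0 : ∀ c : ℝ, 0 ≤ c → IntervalIntegrable (fun x : ℝ => |x| ^ r) volume 0 c := by
    intro c hc
    have h1 := intervalIntegrable_rpow' (a := 0) (b := c) hr
    rw [intervalIntegrable_iff, Set.uIoc_of_le hc] at h1 ⊢
    exact h1.congr_fun (fun x hx => by rw [abs_of_pos hx.1]) measurableSet_Ioc
  intro c
  rcases le_total 0 c with hc | hc
  · exact h0 c hc
  · rw [IntervalIntegrable.iff_comp_neg, neg_zero]
    simpa only [abs_neg] using h0 (-c) (by linarith)

lemma abs_sub_rpow_intervalIntegrable {r : ℝ} (hr : -1 < r) (v a b : ℝ) :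
    IntervalIntegrable (fun u : ℝ => |u - v| ^ r) volume a b := by
  simpa using (abs_rpow_intervalIntegrable hr (a - v) (b - v)).comp_sub_right v

lemma ff_intervalIntegrable {r : ℝ} (hr : -1 < r) (θ v a b : ℝ) :
    IntervalIntegrable (fun u => ff θ r u v) volume a b := by
  have h1 := abs_sub_rpow_intervalIntegrable hr v a b
  have h2 : ContinuousOn (fun u : ℝ => Real.exp (-θ * u - θ * v)) (Set.uIcc a b) :=
    (Real.continuous_exp.comp (by continuity)).continuousOn
  simpa only [ff] using h1.continuousOn_mul h2

lemma gg_nonneg {θ r s : ℝ} (hs : 0 ≤ s) (v : ℝ) : 0 ≤ gg θ r s v :=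
  intervalIntegral.integral_nonneg hs fun u _ => ff_nonneg θ r u v

lemma gg_mono_s {θ r : ℝ} (hr : -1 < r) {s s' : ℝ} (hs : 0 ≤ s) (hss : s ≤ s') (v : ℝ) :
    gg θ r s v ≤ gg θ r s' v := by
  refine intervalIntegral.integral_mono_interval le_rfl hs hss
    (Filter.Eventually.of_forall fun u => ff_nonneg θ r u v)
    (ff_intervalIntegrable hr θ v 0 s')

lemma gg_stronglyMeasurable (θ r s : ℝ) (hs : 0 ≤ s) :
    StronglyMeasurable (fun v => gg θ r s v) := by
  have hm : StronglyMeasurable (fun p : ℝ × ℝ => ff θ r p.2 p.1) := by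
    apply Measurable.stronglyMeasurable
    unfold ff
    fun_prop
  have h := hm.integral_prod_right' (ν := volume.restrict (Set.Ioc 0 s))
  have : (fun v => gg θ r s v) = fun v => ∫ u in Set.Ioc 0 s, ff θ r u v := by
    funext v
    rw [gg, intervalIntegral.integral_of_le hs]
  rw [this]
  exact h

lemma gg_le_bound {θ r : ℝ} (hθ : 0 < θ) (hr : -1 < r) {s T v : ℝ} (hs : 0 ≤ s) (hsT : s ≤ T)
    (hv : 0 ≤ v) (hvT : v ≤ T) :
    gg θ r s v ≤ ∫ x in (-T)..T, |x| ^ r := by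
  have hT : 0 ≤ T := hs.trans hsT
  have step1 : gg θ r s v ≤ ∫ u in (0:ℝ)..s, |u - v| ^ r := by
    refine intervalIntegral.integral_mono_on hs (ff_intervalIntegrable hr θ v 0 s)
      (abs_sub_rpow_intervalIntegrable hr v 0 s) fun u hu => ?_
    have : Real.exp (-θ * u - θ * v) ≤ 1 := by
      apply Real.exp_le_one_iff.2
      nlinarith [hu.1]
    calc ff θ r u v ≤ 1 * |u - v| ^ r :=
          mul_le_mul_of_nonneg_right this (Real.rpow_nonneg (abs_nonneg _) _)
      _ = |u - v| ^ r := one_mul _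
  have step2 : (∫ u in (0:ℝ)..s, |u - v| ^ r) ≤ ∫ u in (v - T)..(v + T), |u - v| ^ r := by
    refine intervalIntegral.integral_mono_interval (by linarith) hs (by linarith)
      (Filter.Eventually.of_forall fun x => Real.rpow_nonneg (abs_nonneg _) _)
      (abs_sub_rpow_intervalIntegrable hr v (v - T) (v + T))
  have step3 : (∫ u in (v - T)..(v + T), |u - v| ^ r) = ∫ x in (-T)..T, |x| ^ r := by
    have := intervalIntegral.integral_comp_sub_right (a := v - T) (b := v + T)
      (fun x : ℝ => |x| ^ r) v
    simpa using this
  linarith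

lemma gg_intervalIntegrable {θ r : ℝ} (hθ : 0 < θ) (hr : -1 < r) {s a b : ℝ} (hs : 0 ≤ s)
    (ha : 0 ≤ a) (hab : a ≤ b) :
    IntervalIntegrable (fun v => gg θ r s v) volume a b := by
  set T := max b s with hTdef
  have hbT : b ≤ T := le_max_left _ _
  have hsT : s ≤ T := le_max_right _ _
  rw [intervalIntegrable_iff, Set.uIoc_of_le hab]
  refine Integrable.mono' (g := fun _ => ∫ x in (-T)..T, |x| ^ r)
    (integrableOn_const measure_Ioc_lt_top.ne)
    (gg_stronglyMeasurable θ r s hs).aestronglyMeasurable.restrict ?_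
  refine (ae_restrict_iff' measurableSet_Ioc).2 (Filter.Eventually.of_forall fun v hv => ?_)
  have h0 : 0 ≤ gg θ r s v := gg_nonneg hs v
  rw [Real.norm_eq_abs, abs_of_nonneg h0]
  exact gg_le_bound hθ hr hs hsT (ha.trans hv.1.le) (hv.2.trans hbT)

lemma G2_nonneg {θ r s t : ℝ} (hs : 0 ≤ s) (ht : 0 ≤ t) : 0 ≤ G2 θ r s t :=
  intervalIntegral.integral_nonneg ht fun v _ => gg_nonneg hs v

lemma G2_mono_s {θ r : ℝ} (hθ : 0 < θ) (hr : -1 < r) {s s' t : ℝ} (ht : 0 ≤ t) (hs : 0 ≤ s)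
    (hss : s ≤ s') : G2 θ r s t ≤ G2 θ r s' t := by
  refine intervalIntegral.integral_mono_on ht (gg_intervalIntegrable hθ hr hs le_rfl ht)
    (gg_intervalIntegrable hθ hr (hs.trans hss) le_rfl ht) fun v _ => gg_mono_s hr hs hss v

lemma G2_mono_t {θ r : ℝ} (hθ : 0 < θ) (hr : -1 < r) {s t t' : ℝ} (hs : 0 ≤ s) (ht : 0 ≤ t)
    (htt : t ≤ t') : G2 θ r s t ≤ G2 θ r s t' := by
  refine intervalIntegral.integral_mono_interval le_rfl ht htt
    (Filter.Eventually.of_forall fun v => gg_nonneg hs v)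
    (gg_intervalIntegrable hθ hr hs le_rfl (ht.trans htt))

lemma gg_one_ge {θ r : ℝ} (hθ : 0 < θ) (hr : -1 < r) (hr0 : r ≤ 0) {v : ℝ} (hv : v ∈ Set.Icc (0:ℝ) 1) :
    Real.exp (-2 * θ) ≤ gg θ r 1 v := by
  have hne : ∀ᵐ u ∂(volume.restrict (Set.Icc (0:ℝ) 1)), u ≠ v := by
    refine ae_restrict_of_ae ?_
    have : {u : ℝ | ¬ u ≠ v} = {v} := by ext u; simp
    rw [ae_iff, this]
    exact Real.volume_singleton
  have hmem := ae_restrict_mem (μ := volume) (measurableSet_Icc (a := (0:ℝ)) (b := (1:ℝ)))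
  have hle : (fun _ : ℝ => Real.exp (-2 * θ)) ≤ᵐ[volume.restrict (Set.Icc (0:ℝ) 1)]
      fun u => ff θ r u v := by
    filter_upwards [hne, hmem] with u hu hu1
    have h1 : Real.exp (-2 * θ) ≤ Real.exp (-θ * u - θ * v) := by
      apply Real.exp_le_exp.2
      nlinarith [hu1.1, hu1.2, hv.1, hv.2]
    have h2 : (1:ℝ) ≤ |u - v| ^ r := by
      refine Real.one_le_rpow_of_pos_of_le_one_of_nonpos
        (abs_pos.2 (sub_ne_zero.2 hu)) ?_ hr0
      rw [abs_sub_le_iff]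
      constructor <;> linarith [hu1.1, hu1.2, hv.1, hv.2]
    calc Real.exp (-2 * θ) = Real.exp (-2 * θ) * 1 := (mul_one _).symm
      _ ≤ Real.exp (-θ * u - θ * v) * |u - v| ^ r :=
          mul_le_mul h1 h2 zero_le_one (Real.exp_pos _).le
      _ = ff θ r u v := rfl
  have := intervalIntegral.integral_mono_ae_restrict (a := (0:ℝ)) (b := 1) zero_le_one
    intervalIntegrable_const (ff_intervalIntegrable hr θ v 0 1) hle
  simpa [gg] using this

lemma G2_ge {θ r : ℝ} (hθ : 0 < θ) (hr : -1 < r) (hr0 : r ≤ 0) {s t : ℝ} (hs : 1 ≤ s)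
    (ht : 1 ≤ t) : Real.exp (-2 * θ) ≤ G2 θ r s t := by
  have h11 : Real.exp (-2 * θ) ≤ G2 θ r 1 1 := by
    have hmono := intervalIntegral.integral_mono_on (a := (0:ℝ)) (b := 1) zero_le_one
      (intervalIntegrable_const (c := Real.exp (-2 * θ)))
      (gg_intervalIntegrable hθ hr zero_le_one le_rfl zero_le_one)
      (fun v hv => gg_one_ge hθ hr hr0 hv)
    simpa [G2] using hmono
  calc Real.exp (-2 * θ) ≤ G2 θ r 1 1 := h11
    _ ≤ G2 θ r s 1 := G2_mono_s hθ hr zero_le_one zero_le_one hs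
    _ ≤ G2 θ r s t := G2_mono_t hθ hr (by linarith) zero_le_one ht

lemma G2_s_intervalIntegrable {θ r : ℝ} (hθ : 0 < θ) (hr : -1 < r) {t a b : ℝ} (ht : 0 ≤ t)
    (ha : 0 ≤ a) (hab : a ≤ b) :
    IntervalIntegrable (fun s => G2 θ r s t) volume a b := by
  apply MonotoneOn.intervalIntegrable
  intro x hx y hy hxy
  rw [Set.uIcc_of_le hab] at hx hy
  exact G2_mono_s hθ hr ht (ha.trans hx.1) hxy

lemma key {θ r : ℝ} (hθ : 0 < θ) (hr : -1 < r) (hr0 : r ≤ 0) {T : ℝ} (hT : 1 ≤ T) :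
    Real.exp (-2 * θ) * (T - 1) ^ 2 ≤
      ∫ t in (0:ℝ)..T, ∫ s in (0:ℝ)..T, G2 θ r s t := by
  set A := Real.exp (-2 * θ) with hA
  have hT0 : (0:ℝ) ≤ T := by linarith
  set Ht : ℝ → ℝ := fun t => ∫ s in (0:ℝ)..T, G2 θ r s t with hHt
  have Ht_nonneg : ∀ t, 0 ≤ t → 0 ≤ Ht t := fun t ht =>
    intervalIntegral.integral_nonneg hT0 fun s hs => G2_nonneg hs.1 ht
  have Ht_mono : ∀ t t', 0 ≤ t → t ≤ t' → Ht t ≤ Ht t' := by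
    intro t t' ht htt
    refine intervalIntegral.integral_mono_on hT0
      (G2_s_intervalIntegrable hθ hr ht le_rfl hT0)
      (G2_s_intervalIntegrable hθ hr (ht.trans htt) le_rfl hT0)
      fun s hs => G2_mono_t hθ hr hs.1 ht htt
  have Ht_int : IntervalIntegrable Ht volume 0 T := by
    apply MonotoneOn.intervalIntegrable
    intro x hx y hy hxy
    rw [Set.uIcc_of_le hT0] at hx hy
    exact Ht_mono x y hx.1 hxy
  have Ht_ge : ∀ t ∈ Set.Icc (1:ℝ) T, A * (T - 1) ≤ Ht t := by
    intro t ht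
    have step1 : (∫ s in (1:ℝ)..T, G2 θ r s t) ≤ Ht t := by
      refine intervalIntegral.integral_mono_interval zero_le_one hT le_rfl
        ((ae_restrict_iff' measurableSet_Ioc).2
          (Filter.Eventually.of_forall fun s hs => G2_nonneg hs.1.le (by linarith [ht.1])))
        (G2_s_intervalIntegrable hθ hr (by linarith [ht.1]) le_rfl hT0)
    have step2 : (∫ s in (1:ℝ)..T, (A : ℝ)) ≤ ∫ s in (1:ℝ)..T, G2 θ r s t := by
      refine intervalIntegral.integral_mono_on hT intervalIntegrable_const
        (G2_s_intervalIntegrable hθ hr (by linarith [ht.1]) zero_le_one hT)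
        fun s hs => G2_ge hθ hr hr0 hs.1 ht.1
    have step3 : (∫ s in (1:ℝ)..T, (A : ℝ)) = A * (T - 1) := by
      simp [mul_comm]
    linarith
  have final1 : (∫ t in (1:ℝ)..T, Ht t) ≤ ∫ t in (0:ℝ)..T, Ht t := by
    refine intervalIntegral.integral_mono_interval zero_le_one hT le_rfl
      ((ae_restrict_iff' measurableSet_Ioc).2
        (Filter.Eventually.of_forall fun t htt => Ht_nonneg t htt.1.le)) Ht_int
  have final2 : A * (T - 1) * (T - 1) ≤ ∫ t in (1:ℝ)..T, Ht t := by
    have h := intervalIntegral.integral_mono_on hT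
      (intervalIntegrable_const (c := A * (T - 1)))
      (Ht_int.mono_set (by
        rw [Set.uIcc_of_le hT, Set.uIcc_of_le hT0]
        exact Set.Icc_subset_Icc (by norm_num) le_rfl)) Ht_ge
    have hc : (∫ _ in (1:ℝ)..T, (A * (T - 1) : ℝ)) = A * (T - 1) * (T - 1) := by
      simp [mul_comm]
    linarith
  have : A * (T - 1) ^ 2 = A * (T - 1) * (T - 1) := by ring
  linarith

end SigmaSqAux

open SigmaSqAux in
theorem sigma_sq_lower_bound (θ H : ℝ) (hθ : 0 < θ) (hH1 : 1 / 2 < H) (hH2 : H < 1) :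
    (∃ c : ℝ, 0 < c ∧ ∃ T₀ : ℝ, 0 < T₀ ∧ ∀ T : ℝ, T₀ ≤ T →
      c * T ^ (2 * H) ≤
        ∫ t in (0:ℝ)..T, ∫ s in (0:ℝ)..T, ∫ v in (0:ℝ)..t, ∫ u in (0:ℝ)..s,
          Real.exp (-θ * u - θ * v) * |u - v| ^ (2 * H - 2)) ∧
    Tendsto (fun T : ℝ =>
        (∫ t in (0:ℝ)..T, ∫ s in (0:ℝ)..T, ∫ v in (0:ℝ)..t, ∫ u in (0:ℝ)..s,
          Real.exp (-θ * u - θ * v) * |u - v| ^ (2 * H - 2)) / T)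
      atTop atTop := by
  set r : ℝ := 2 * H - 2 with hrdef
  have hr : -1 < r := by simp only [hrdef]; linarith
  have hr0 : r ≤ 0 := by simp only [hrdef]; linarith
  set A := Real.exp (-2 * θ) with hA
  have hApos : 0 < A := Real.exp_pos _
  have hσ : ∀ T : ℝ, (∫ t in (0:ℝ)..T, ∫ s in (0:ℝ)..T, ∫ v in (0:ℝ)..t, ∫ u in (0:ℝ)..s,
      Real.exp (-θ * u - θ * v) * |u - v| ^ (2 * H - 2)) =
      ∫ t in (0:ℝ)..T, ∫ s in (0:ℝ)..T, G2 θ r s t := by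
    intro T
    simp only [G2, gg, ff, hrdef]
  have hmain : ∀ T : ℝ, 2 ≤ T → A / 4 * T ^ 2 ≤
      ∫ t in (0:ℝ)..T, ∫ s in (0:ℝ)..T, G2 θ r s t := by
    intro T hT
    have h1 : A * (T - 1) ^ 2 ≤ ∫ t in (0:ℝ)..T, ∫ s in (0:ℝ)..T, G2 θ r s t :=
      key hθ hr hr0 (by linarith)
    nlinarith [hApos, sq_nonneg (T - 2)]
  constructor
  · refine ⟨A / 4, by positivity, 2, by norm_num, fun T hT => ?_⟩
    rw [hσ T]
    have hrpow : T ^ (2 * H) ≤ T ^ (2:ℝ) :=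
      Real.rpow_le_rpow_of_exponent_le (by linarith) (by linarith)
    have h2 : T ^ (2:ℝ) = T ^ 2 := by
      rw [show ((2:ℝ)) = ((2:ℕ):ℝ) by norm_num, Real.rpow_natCast]
    calc A / 4 * T ^ (2 * H) ≤ A / 4 * T ^ 2 := by
          rw [← h2]; exact mul_le_mul_of_nonneg_left hrpow (by positivity)
      _ ≤ _ := hmain T hT
  · refine tendsto_atTop_mono' atTop ?_
      (Tendsto.const_mul_atTop (show (0:ℝ) < A / 4 by positivity) tendsto_id)
    filter_upwards [eventually_ge_atTop (2:ℝ)] with T hT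
    have hTpos : (0:ℝ) < T := by linarith
    rw [hσ T]
    have h1 := hmain T hT
    have h2 : A / 4 * T = (A / 4 * T ^ 2) / T := by field_simp
    calc A / 4 * id T = (A / 4 * T ^ 2) / T := by rw [id_eq]; exact h2
      _ ≤ _ := (div_le_div_iff_of_pos_right hTpos).2 h1
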